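/- Let τ be a noncrossing tree with convex geodesics on a hull configuration P, and let τ' be obtained from τ by sliding the edge e = {p,q} along f = {q,r} (replacing e by e' = {p,r}), where τ' is again a noncrossing tree with convex geodesics. Then for π ∈ Bool(τ), one has π ∈ Bool(τ') if and only if the block of π containing p either contains both q and r or contains neither q nor r. -/

import Mathlib

open scoped Classical

/-- The vertex type of a finite point configuration `P ⊆ ℂ`. -/
abbrev Vtx (P : Finset ℂ) := {z : ℂ // z ∈ P}

/-- The block (as a set of points of the plane) of the partition `s` containing `a`. -/
def cblock {P : Finset ℂ} (s : Setoid (Vtx P)) (a : Vtx P) : Set ℂ :=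
  {w : ℂ | ∃ b : Vtx P, s a b ∧ w = ↑b}

/-- A partition (setoid) of the points of `P` is noncrossing if the convex hulls of
distinct blocks are pairwise disjoint. -/
def NoncrossingS (P : Finset ℂ) (s : Setoid (Vtx P)) : Prop :=
  ∀ a b : Vtx P, ¬ s a b →
    Disjoint (convexHull ℝ (cblock s a)) (convexHull ℝ (cblock s b))

/-- `P` is a hull configuration: no point of `P` lies in the interior of the convex hull
(this includes the degenerate case of a collinear configuration, whose hull has empty
interior). -/
def IsHullConfig (P : Finset ℂ) : Prop :=
  ∀ z ∈ P, z ∉ interior (convexHull ℝ (↑P : Set ℂ))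

/-- The number of blocks of a partition of the points of `P`. -/
noncomputable def numBlocks {P : Finset ℂ} (s : Setoid (Vtx P)) : ℕ :=
  Set.ncard {C : Set (Vtx P) | ∃ a, C = {b | s a b}}

/-- The rank of a partition in `NC(P)`: `|P|` minus the number of blocks. -/
noncomputable def rkNC {P : Finset ℂ} (s : Setoid (Vtx P)) : ℕ := P.card - numBlocks s

/-- The partition of the points of `P` into connected components of the graph `H`. -/
def partOf {P : Finset ℂ} (H : SimpleGraph (Vtx P)) : Setoid (Vtx P) :=
  ⟨fun a b => H.Reachable a b,
   ⟨fun a => SimpleGraph.Reachable.refl a, fun h => h.symm, fun h h' => h.trans h'⟩⟩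

/-- `Bool(τ)`: the set of partitions `Part(μ)` of subforests (subgraphs) `μ ⊆ τ`. -/
def boolOf {P : Finset ℂ} (G : SimpleGraph (Vtx P)) : Set (Setoid (Vtx P)) :=
  {s | ∃ H ≤ G, s = partOf H}

/-- The straight-line edges of `G` are pairwise noncrossing: two distinct edges meet
at most in common endpoints. -/
def EdgesNoncrossing (P : Finset ℂ) (G : SimpleGraph (Vtx P)) : Prop :=
  ∀ a b c d : Vtx P, G.Adj a b → G.Adj c d →
    ({a, b} : Set (Vtx P)) ≠ {c, d} →
    ∀ x ∈ segment ℝ (a : ℂ) (b : ℂ) ∩ segment ℝ (c : ℂ) (d : ℂ),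
      (x = ↑a ∨ x = ↑b) ∧ (x = ↑c ∨ x = ↑d)

/-- `G` has convex geodesics: for every connected subgraph (subtree), the convex hull of
its vertices contains no points of `P` other than those vertices. -/
def ConvexGeodesics (P : Finset ℂ) (G : SimpleGraph (Vtx P)) : Prop :=
  ∀ S : Set (Vtx P), (G.induce S).Connected →
    ∀ v : Vtx P, (v : ℂ) ∈ convexHull ℝ (Subtype.val '' S) → v ∈ S

/-- A noncrossing (spanning) tree on `P` with convex geodesics. -/
def IsNCTree (P : Finset ℂ) (G : SimpleGraph (Vtx P)) : Prop :=
  G.IsTree ∧ EdgesNoncrossing P G ∧ ConvexGeodesics P G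

section Aux
open SimpleGraph

variable {V : Type*}

/-- If every edge of `G₁` joins vertices reachable in `G₂`, then `G₁`-reachability
implies `G₂`-reachability. -/
private lemma reachable_mono_rel {G₁ G₂ : SimpleGraph V}
    (h : ∀ a b : V, G₁.Adj a b → G₂.Reachable a b) {a b : V}
    (hr : G₁.Reachable a b) : G₂.Reachable a b := by
  obtain ⟨w⟩ := hr
  induction w with
  | nil => exact Reachable.refl _
  | cons ha _ ih => exact (h _ _ ha).trans ih

/-- In a tree `T` with edges `p-q`, `q-r` and `p ≠ r`, any subgraph `H ≤ T` in which
`p` and `r` are reachable from one another must contain both edges. -/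
private lemma tree_path_edges [DecidableEq V] {T : SimpleGraph V} (hT : T.IsTree) {p q r : V}
    (hpq : T.Adj p q) (hqr : T.Adj q r) (hpr : p ≠ r)
    {H : SimpleGraph V} (hH : H ≤ T) (h : H.Reachable p r) :
    H.Adj p q ∧ H.Adj q r := by
  obtain ⟨w⟩ := h
  let pa : H.Walk p r := w.toPath
  have hpa : pa.IsPath := w.toPath.2
  have hmap : (pa.mapLe hH).IsPath := hpa.mapLe hH
  have he : (Walk.cons hpq (Walk.cons hqr Walk.nil) : T.Walk p r).IsPath := by
    simp [Walk.isPath_def, hpq.ne, hqr.ne, hpr]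
  have huniq := hT.existsUnique_path p r
  have heq : pa.mapLe hH = Walk.cons hpq (Walk.cons hqr Walk.nil) :=
    huniq.unique hmap he
  have hedges : (pa.mapLe hH).edges = pa.edges := by
    have hid : Sym2.map ⇑(SimpleGraph.Hom.ofLE hH) = id := by
      funext e
      induction e using Sym2.ind with
      | _ x y => rfl
    simp [Walk.mapLe, Walk.edges_map, hid]
  have h1 : s(p, q) ∈ pa.edges := by rw [← hedges, heq]; simp
  have h2 : s(q, r) ∈ pa.edges := by rw [← hedges, heq]; simp
  exact ⟨pa.adj_of_mem_edges h1, pa.adj_of_mem_edges h2⟩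

end Aux

/-- Slide lemma: let `τ` be a noncrossing tree with convex geodesics on a hull
configuration `P`, and let `τ'` be obtained from `τ` by sliding the edge `{p,q}` along
`{q,r}` (replacing `{p,q}` by `{p,r}`); assume `τ'` is again a noncrossing tree with
convex geodesics.  Then a partition `π ∈ Bool(τ)` lies in `Bool(τ')` if and only if the
block of `π` containing `p` either contains both `q` and `r` or contains neither. -/


theorem stmt7 (P : Finset ℂ) (hP : IsHullConfig P)
    (G : SimpleGraph (Vtx P)) (hG : IsNCTree P G)
    (p q r : Vtx P) (hpq : G.Adj p q) (hqr : G.Adj q r) (hpr : p ≠ r)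
    (hG' : IsNCTree P
      (SimpleGraph.fromEdgeSet ((G.edgeSet \ {s(p, q)}) ∪ {s(p, r)}))) :
    ∀ π ∈ boolOf G,
      (π ∈ boolOf (SimpleGraph.fromEdgeSet ((G.edgeSet \ {s(p, q)}) ∪ {s(p, r)})) ↔
        ((π p q ∧ π p r) ∨ (¬ π p q ∧ ¬ π p r))) := by
    classical
  intro π hπ
  obtain ⟨H, hH, rfl⟩ := hπ
  set S : Set (Sym2 (Vtx P)) := (G.edgeSet \ {s(p, q)}) ∪ {s(p, r)} with hS
  have hrq_ne : s(r, q) ≠ s(p, q) := by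
    intro h
    rw [Sym2.eq_iff] at h
    revert h
    rintro (⟨h1, h2⟩ | ⟨h1, h2⟩)
    · exact hpr h1.symm
    · exact hqr.ne h1.symm
  have hG'pr : (SimpleGraph.fromEdgeSet S).Adj p r := by
    rw [SimpleGraph.fromEdgeSet_adj]
    exact ⟨Or.inr rfl, hpr⟩
  have hG'rq : (SimpleGraph.fromEdgeSet S).Adj r q := by
    rw [SimpleGraph.fromEdgeSet_adj]
    exact ⟨Or.inl ⟨(SimpleGraph.mem_edgeSet _).2 hqr.symm, hrq_ne⟩, hqr.ne'⟩
  constructor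
  · rintro ⟨H', hH', hEq⟩
    by_cases hq : (partOf H) p q
    · left
      refine ⟨hq, ?_⟩
      have hq' : H'.Reachable p q := by
        have := hEq ▸ hq
        exact this
      obtain ⟨h1, h2⟩ := tree_path_edges hG'.1 hG'pr hG'rq hpq.ne hH' hq'
      have : H'.Reachable p r := h1.reachable
      show (partOf H) p r
      rw [hEq]
      exact this
    · right
      refine ⟨hq, ?_⟩
      intro hr
      have hr' : H.Reachable p r := hr
      obtain ⟨h1, h2⟩ := tree_path_edges hG.1 hpq hqr hpr hH hr'
      exact hq h1.reachable
  · rintro (⟨hq, hr⟩ | ⟨hq, hr⟩)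
    · obtain ⟨h1, h2⟩ := tree_path_edges hG.1 hpq hqr hpr hH (hr : H.Reachable p r)
      refine ⟨SimpleGraph.fromEdgeSet ((H.edgeSet \ {s(p, q)}) ∪ {s(p, r)}), ?_, ?_⟩
      · exact SimpleGraph.fromEdgeSet_mono
          (Set.union_subset_union_left _
            (Set.diff_subset_diff_left (SimpleGraph.edgeSet_mono hH)))
      · have hH'pr : (SimpleGraph.fromEdgeSet ((H.edgeSet \ {s(p, q)}) ∪ {s(p, r)})).Adj p r := by
          rw [SimpleGraph.fromEdgeSet_adj]
          exact ⟨Or.inr rfl, hpr⟩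
        have hH'rq : (SimpleGraph.fromEdgeSet ((H.edgeSet \ {s(p, q)}) ∪ {s(p, r)})).Adj r q := by
          rw [SimpleGraph.fromEdgeSet_adj]
          exact ⟨Or.inl ⟨(SimpleGraph.mem_edgeSet _).2 h2.symm, hrq_ne⟩, hqr.ne'⟩
        apply Setoid.ext
        intro a b
        show H.Reachable a b ↔ (SimpleGraph.fromEdgeSet ((H.edgeSet \ {s(p, q)}) ∪ {s(p, r)})).Reachable a b
        constructor
        · refine reachable_mono_rel ?_
          intro a b hab
          by_cases hcase : s(a, b) = s(p, q)
          · have hpq' : (SimpleGraph.fromEdgeSet ((H.edgeSet \ {s(p, q)}) ∪ {s(p, r)})).Reachable p q :=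
              hH'pr.reachable.trans hH'rq.reachable
            rw [Sym2.eq_iff] at hcase
            rcases hcase with ⟨ha, hb⟩ | ⟨ha, hb⟩
            · subst ha; subst hb; exact hpq'
            · subst ha; subst hb; exact hpq'.symm
          · refine SimpleGraph.Adj.reachable ?_
            rw [SimpleGraph.fromEdgeSet_adj]
            exact ⟨Or.inl ⟨(SimpleGraph.mem_edgeSet _).2 hab, hcase⟩, hab.ne⟩
        · refine reachable_mono_rel ?_
          intro a b hab
          rw [SimpleGraph.fromEdgeSet_adj] at hab
          obtain ⟨hmem | hmem, hne⟩ := hab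
          · exact ((SimpleGraph.mem_edgeSet _).1 hmem.1).reachable
          · have hpr' : H.Reachable p r := h1.reachable.trans h2.reachable
            rw [Set.mem_singleton_iff, Sym2.eq_iff] at hmem
            rcases hmem with ⟨ha, hb⟩ | ⟨ha, hb⟩
            · subst ha; subst hb; exact hpr'
            · subst ha; subst hb; exact hpr'.symm
    · refine ⟨H, ?_, rfl⟩
      intro a b hab
      rw [SimpleGraph.fromEdgeSet_adj]
      refine ⟨Or.inl ⟨(SimpleGraph.mem_edgeSet _).2 (hH hab), ?_⟩, hab.ne⟩
      intro heq
      rw [Set.mem_singleton_iff] at heq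
      rw [Sym2.eq_iff] at heq
      rcases heq with ⟨ha, hb⟩ | ⟨ha, hb⟩
      · subst ha; subst hb; exact hq hab.reachable
      · subst ha; subst hb; exact hq hab.symm.reachable
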